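/- arXiv:0807.4671 — 3 statements merged into one kernel-verified Lean document; each statement's English description precedes it below -/
import Mathlib

section
/- Let q = 2^r with r a positive integer, and let a ∈ 𝔽_q^*. Then Σ_{w ∈ SO⁺(2,q)} λ(a · Tr w) = K(λ;a), where Tr w is the matrix trace of w. -/
open Finset Matrix

/-- The quadratic form `θ⁺(x) = ∑ i, x_i x_{n+i}` on `F^{2n}` (columns indexed by `Fin n ⊕ Fin n`). -/
def thetaPlus (F : Type) [Field F] (n : ℕ) (x : Fin n ⊕ Fin n → F) : F :=
  ∑ i : Fin n, x (Sum.inl i) * x (Sum.inr i)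

/-- The orthogonal group `O⁺(2n,q)`: invertible matrices preserving `θ⁺`. -/
noncomputable def OplusGrp (F : Type) [Field F] [Fintype F] [DecidableEq F] (n : ℕ) :
    Finset (Matrix (Fin n ⊕ Fin n) (Fin n ⊕ Fin n) F) := by
  classical
  exact Finset.univ.filter (fun w => IsUnit w ∧
    ∀ x : Fin n ⊕ Fin n → F, thetaPlus F n (w.mulVec x) = thetaPlus F n x)

/-- `SO⁺(2n,q)`: the kernel of `δ⁺(w) = Tr(B ᵗC)` on `O⁺(2n,q)`,
where `w = [[A,B],[C,D]]` in `n × n` blocks. -/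
noncomputable def SOplusGrp (F : Type) [Field F] [Fintype F] [DecidableEq F] (n : ℕ) :
    Finset (Matrix (Fin n ⊕ Fin n) (Fin n ⊕ Fin n) F) := by
  classical
  exact (OplusGrp F n).filter
    (fun w => Matrix.trace (Matrix.toBlocks₁₂ w * (Matrix.toBlocks₂₁ w)ᵀ) = 0)

/-- The trace map `tr(x) = x + x² + ⋯ + x^{2^{r−1}}`, valued in `𝔽₂ = {0,1} ⊆ F`. -/
def trF (F : Type) [Field F] (r : ℕ) (x : F) : F := ∑ i ∈ Finset.range r, x ^ 2 ^ i

/-- The canonical additive character `λ(x) = (−1)^{tr(x)} ∈ {±1} ⊆ ℤ`. -/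
noncomputable def lam (F : Type) [Field F] (r : ℕ) (x : F) : ℤ := by
  classical exact if trF F r x = 0 then 1 else -1

/-- The trace map `tr` viewed as a function into `𝔽₂ = ZMod 2`. -/
noncomputable def tr2 (F : Type) [Field F] (r : ℕ) (x : F) : ZMod 2 := by
  classical exact if trF F r x = 0 then 0 else 1

/-- The Kloosterman sum `K(λ;a) = ∑_{α ∈ F*} λ(α + aα⁻¹)`. -/
noncomputable def Kl (F : Type) [Field F] [Fintype F] (r : ℕ) (a : F) : ℤ := by
  classical
  exact ∑ α ∈ Finset.univ.filter (fun α : F => α ≠ 0), lam F r (α + a * α⁻¹)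

/-- The `m`-dimensional Kloosterman sum
`K_m(λ;a) = ∑_{α₁,…,α_m ∈ F*} λ(α₁ + ⋯ + α_m + aα₁⁻¹⋯α_m⁻¹)`;
for `m = 0` this is `K₀(λ;a) = λ(a)`. -/
noncomputable def Klm (F : Type) [Field F] [Fintype F] (r m : ℕ) (a : F) : ℤ := by
  classical
  exact ∑ v ∈ Finset.univ.filter (fun v : Fin m → F => ∀ i, v i ≠ 0),
    lam F r ((∑ i, v i) + a * (∏ i, v i)⁻¹)

/-- The power moment `MK^h = ∑_{a ∈ F*} K(λ;a)^h`. -/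
noncomputable def MK (F : Type) [Field F] [Fintype F] (r h : ℕ) : ℤ := by
  classical exact ∑ a ∈ Finset.univ.filter (fun a : F => a ≠ 0), (Kl F r a) ^ h

/-- The power moment `MK₂^h = ∑_{a ∈ F*} K₂(λ;a)^h` of 2-dimensional Kloosterman sums. -/
noncomputable def MK2 (F : Type) [Field F] [Fintype F] (r h : ℕ) : ℤ := by
  classical exact ∑ a ∈ Finset.univ.filter (fun a : F => a ≠ 0), (Klm F r 2 a) ^ h

/-- The binary code `C(G) = {u ∈ 𝔽₂^G : ∑_{g ∈ G} u_g Tr(g) = 0 in F}`. -/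
noncomputable def code (F : Type) [Field F] [Fintype F] [DecidableEq F]
    {ι : Type} [Fintype ι] [DecidableEq ι] (G : Finset (Matrix ι ι F)) :
    Finset (↥G → ZMod 2) := by
  classical
  exact Finset.univ.filter
    (fun u => ∑ g : ↥G, (u g).val • Matrix.trace (g : Matrix ι ι F) = 0)

/-- Number of codewords of Hamming weight `j` in the code `C(G)`. -/
noncomputable def wtCount (F : Type) [Field F] [Fintype F] [DecidableEq F]
    {ι : Type} [Fintype ι] [DecidableEq ι] (G : Finset (Matrix ι ι F)) (j : ℕ) : ℕ := by
  classical
  exact ((code F G).filter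
    (fun u => (Finset.univ.filter (fun g : ↥G => u g = 1)).card = j)).card

/-- `t! · S(h,t)` where `S(h,t)` is the Stirling number of the second kind,
`S(h,t) = (1/t!) ∑_{j=0}^{t} (−1)^{t−j} C(t,j) j^h`. -/
def tS (h t : ℕ) : ℤ :=
  ∑ j ∈ Finset.range (t + 1), (-1 : ℤ) ^ (t - j) * (t.choose j : ℤ) * (j : ℤ) ^ h

/-- Binomial coefficient with integer arguments: `0` whenever `k < 0` or `k > n`. -/
def ichoose (n k : ℤ) : ℤ := if 0 ≤ k ∧ k ≤ n then (n.toNat.choose k.toNat : ℤ) else 0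

-- aux
def Mdiag (F : Type) [Field F] (α : F) : Matrix (Fin 1 ⊕ Fin 1) (Fin 1 ⊕ Fin 1) F :=
  Matrix.of fun i j =>
    match i, j with
    | .inl _, .inl _ => α
    | .inr _, .inr _ => α⁻¹
    | _, _ => 0

variable {F : Type} [Field F] [Fintype F] [DecidableEq F]

lemma mem_SO_iff (w : Matrix (Fin 1 ⊕ Fin 1) (Fin 1 ⊕ Fin 1) F) :
    w ∈ SOplusGrp F 1 ↔ ∃ α : F, α ≠ 0 ∧ w = Mdiag F α := by
  classical
  constructor
  · rintro hw
    simp only [SOplusGrp, OplusGrp, Finset.mem_filter, Finset.mem_univ, true_and] at hw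
    obtain ⟨⟨-, hq⟩, hd⟩ := hw
    set A := w (Sum.inl 0) (Sum.inl 0)
    set B := w (Sum.inl 0) (Sum.inr 0)
    set C := w (Sum.inr 0) (Sum.inl 0)
    set D := w (Sum.inr 0) (Sum.inr 0)
    have hBC : B * C = 0 := by
      simpa [Matrix.trace, Matrix.mul_apply, Matrix.toBlocks₁₂, Matrix.toBlocks₂₁,
        Fin.sum_univ_one] using hd
    have h1 : A * C = 0 := by
      have := hq (Sum.elim (fun _ => (1:F)) (fun _ => 0))
      simpa [thetaPlus, Matrix.mulVec, dotProduct, Fintype.sum_sum_type,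
        Fin.sum_univ_one] using this
    have h2 : B * D = 0 := by
      have := hq (Sum.elim (fun _ => (0:F)) (fun _ => 1))
      simpa [thetaPlus, Matrix.mulVec, dotProduct, Fintype.sum_sum_type,
        Fin.sum_univ_one] using this
    have h3 : (A + B) * (C + D) = 1 := by
      have := hq (Sum.elim (fun _ => (1:F)) (fun _ => 1))
      simpa [thetaPlus, Matrix.mulVec, dotProduct, Fintype.sum_sum_type,
        Fin.sum_univ_one] using this
    have hAD : A * D = 1 := by
      linear_combination h3 - h1 - hBC - h2
    have hA : A ≠ 0 := left_ne_zero_of_mul (hAD ▸ one_ne_zero)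
    have hD : D ≠ 0 := right_ne_zero_of_mul (hAD ▸ one_ne_zero)
    have hC : C = 0 := by rcases mul_eq_zero.mp h1 with h | h; exact absurd h hA; exact h
    have hB : B = 0 := by rcases mul_eq_zero.mp h2 with h | h; exact h; exact absurd h hD
    refine ⟨A, hA, ?_⟩
    have hDA : D = A⁻¹ := by field_simp; linear_combination hAD
    ext i j
    rcases i with i | i <;> rcases j with j | j <;>
      simp [Mdiag, Subsingleton.elim i 0, Subsingleton.elim j 0] <;>
      first
        | exact hB
        | exact hC
        | exact hDA
        | rfl
  · rintro ⟨α, hα, rfl⟩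
    simp only [SOplusGrp, OplusGrp, Finset.mem_filter, Finset.mem_univ, true_and]
    refine ⟨⟨?_, ?_⟩, ?_⟩
    · refine isUnit_iff_exists.mpr ⟨Mdiag F α⁻¹, ?_, ?_⟩ <;>
      · ext i j
        rcases i with i | i <;> rcases j with j | j <;>
        simp [Matrix.mul_apply, Mdiag, Fintype.sum_sum_type, Fin.sum_univ_one,
            Matrix.one_apply, mul_inv_cancel₀ hα, inv_mul_cancel₀ hα,
            Subsingleton.elim i 0, Subsingleton.elim j 0, inv_inv]
    · intro x
      have : α * x (Sum.inl 0) * (α⁻¹ * x (Sum.inr 0)) = x (Sum.inl 0) * x (Sum.inr 0) := by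
        field_simp
      simpa [thetaPlus, Matrix.mulVec, dotProduct, Fintype.sum_sum_type, Mdiag,
        Fin.sum_univ_one] using this
    · simp [Matrix.trace, Matrix.mul_apply, Matrix.toBlocks₁₂, Matrix.toBlocks₂₁,
        Mdiag, Fin.sum_univ_one]


theorem stmt4 (r : ℕ) (hr : 1 ≤ r) (F : Type) [Field F] [Fintype F] [DecidableEq F]
    (hF : Fintype.card F = 2 ^ r) (a : F) (ha : a ≠ 0) :
    ∑ w ∈ SOplusGrp F 1, lam F r (a * Matrix.trace w) = Kl F r a := by
  classical
  have hchar : ringChar F = 2 := by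
    apply FiniteField.even_card_iff_char_two.mpr
    rw [hF, ← Nat.sub_add_cancel hr, pow_succ]
    exact Nat.mul_mod_left _ 2
  haveI : CharP F 2 := ringChar.of_eq hchar
  haveI : Fact (Nat.Prime 2) := ⟨Nat.prime_two⟩
  have key : ∀ x : F, trF F r (x ^ 2) = (trF F r x) ^ 2 := by
    intro x
    unfold trF
    rw [sum_pow_char]
    exact Finset.sum_congr rfl fun i _ => by ring
  have lam_sq : ∀ x : F, lam F r (x ^ 2) = lam F r x := by
    intro x
    simp [lam, key, pow_eq_zero_iff]
  have hset : SOplusGrp F 1 = (Finset.univ.filter (fun α : F => α ≠ 0)).image (Mdiag F) := by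
    ext w
    simp only [Finset.mem_image, Finset.mem_filter, Finset.mem_univ, true_and, mem_SO_iff]
    constructor
    · rintro ⟨α, hα, rfl⟩; exact ⟨α, hα, rfl⟩
    · rintro ⟨α, hα, rfl⟩; exact ⟨α, hα, rfl⟩
  have hinj : ∀ α ∈ Finset.univ.filter (fun α : F => α ≠ 0),
      ∀ β ∈ Finset.univ.filter (fun α : F => α ≠ 0), Mdiag F α = Mdiag F β → α = β := by
    intro α _ β _ h
    simpa [Mdiag] using congrFun (congrFun h (Sum.inl 0)) (Sum.inl 0)
  rw [hset, Finset.sum_image hinj]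
  have htr : ∀ α : F, Matrix.trace (Mdiag F α) = α + α⁻¹ := by
    intro α
    simp [Matrix.trace, Mdiag, Fintype.sum_sum_type, Fin.sum_univ_one, Matrix.diag]
  rw [Kl]
  refine (Finset.sum_bij (fun β _ => a⁻¹ * β ^ 2) ?_ ?_ ?_ ?_).symm
  · intro β hβ
    simp only [Finset.mem_filter, Finset.mem_univ, true_and] at hβ ⊢
    exact mul_ne_zero (inv_ne_zero ha) (pow_ne_zero _ hβ)
  · intro β hβ γ hγ h
    have h2 : β ^ 2 = γ ^ 2 := mul_left_cancel₀ (inv_ne_zero ha) h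
    exact frobenius_inj F 2 h2
  · intro α hα
    simp only [Finset.mem_filter, Finset.mem_univ, true_and] at hα
    obtain ⟨β, hβ⟩ := (Finite.injective_iff_surjective.mp (frobenius_inj F 2)) (a * α)
    have hβ' : β ^ 2 = a * α := hβ
    have hβ0 : β ≠ 0 := by
      intro h; rw [h] at hβ'; simp at hβ'
      rcases hβ' with h | h; exact ha h; exact hα h
    refine ⟨β, by simp [hβ0], ?_⟩
    show a⁻¹ * β ^ 2 = α
    rw [hβ']
    field_simp
  · intro β hβ
    simp only [Finset.mem_filter, Finset.mem_univ, true_and] at hβ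
    rw [htr]
    have harg : a * (a⁻¹ * β ^ 2 + (a⁻¹ * β ^ 2)⁻¹) = (β + a * β⁻¹) ^ 2 := by
      rw [CharTwo.add_sq]
      field_simp
    rw [harg, lam_sq]
end

section
/- Let q = 2^r with r a positive integer, and let a ∈ 𝔽_q^*. Then Σ_{w ∈ O⁺(2,q)} λ(a · Tr w) = K(λ;a) + q − 1, where Tr w is the matrix trace of w. -/
open Finset Matrix

section helpers
variable (F : Type) [Field F] [Fintype F] [DecidableEq F] (r : ℕ)

omit [Fintype F] [DecidableEq F] in
lemma trF_zero : trF F r 0 = 0 := by simp [trF]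

omit [Fintype F] [DecidableEq F] in
lemma lam_zero : lam F r 0 = 1 := by simp [lam, trF_zero]

variable (hF : Fintype.card F = 2 ^ r) (hr : 1 ≤ r)
include hF

omit [DecidableEq F] in
lemma pow_card' (x : F) : x ^ 2 ^ r = x := by
  rw [← hF]; exact FiniteField.pow_card x

omit [DecidableEq F] in
lemma trF_sq (x : F) : trF F r (x ^ 2) = trF F r x := by
  have h1 : ∑ i ∈ Finset.range (r+1), x ^ 2 ^ i
      = (∑ i ∈ Finset.range r, x ^ 2 ^ (i+1)) + x ^ 2 ^ 0 :=
    Finset.sum_range_succ' _ r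
  have h2 : ∑ i ∈ Finset.range (r+1), x ^ 2 ^ i
      = (∑ i ∈ Finset.range r, x ^ 2 ^ i) + x ^ 2 ^ r :=
    Finset.sum_range_succ _ r
  have h3 : trF F r (x ^ 2) = ∑ i ∈ Finset.range r, x ^ 2 ^ (i+1) := by
    apply Finset.sum_congr rfl
    intro i _
    rw [← pow_mul]
    congr 1
    ring
  rw [h3]
  have h4 := h1.symm.trans h2
  rw [pow_card' F r hF, pow_zero, pow_one] at h4
  exact add_right_cancel h4

omit [DecidableEq F] in
lemma lam_sq (x : F) : lam F r (x ^ 2) = lam F r x := by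
  rw [lam, lam, trF_sq F r hF]

include hr

omit [DecidableEq F] in
lemma two_eq_zero : (2 : F) = 0 := by
  have h := FiniteField.cast_card_eq_zero F
  rw [hF] at h
  push_cast at h
  exact pow_eq_zero_iff (by omega) |>.mp h

omit [DecidableEq F] in
lemma sq_add (u v : F) : (u + v) ^ 2 = u ^ 2 + v ^ 2 := by
  have h2 := two_eq_zero F r hF hr
  linear_combination (u * v) * h2

end helpers

def dmat (F : Type) [Field F] (α : F) : Matrix (Fin 1 ⊕ Fin 1) (Fin 1 ⊕ Fin 1) F :=
  fun i j => match i, j with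
  | .inl _, .inl _ => α
  | .inr _, .inr _ => α⁻¹
  | _, _ => 0

def amat (F : Type) [Field F] (β : F) : Matrix (Fin 1 ⊕ Fin 1) (Fin 1 ⊕ Fin 1) F :=
  fun i j => match i, j with
  | .inl _, .inr _ => β
  | .inr _, .inl _ => β⁻¹
  | _, _ => 0

section grp
variable (F : Type) [Field F] [Fintype F] [DecidableEq F]

omit [Fintype F] [DecidableEq F] in
lemma theta_apply (x : Fin 1 ⊕ Fin 1 → F) :
    thetaPlus F 1 x = x (Sum.inl 0) * x (Sum.inr 0) := by
  simp [thetaPlus]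

lemma mem_O_iff (w : Matrix (Fin 1 ⊕ Fin 1) (Fin 1 ⊕ Fin 1) F) :
    w ∈ OplusGrp F 1 ↔
      (∃ α : F, α ≠ 0 ∧ w = dmat F α) ∨ (∃ β : F, β ≠ 0 ∧ w = amat F β) := by
  classical
  set A := w (Sum.inl 0) (Sum.inl 0) with hA
  set B := w (Sum.inl 0) (Sum.inr 0) with hB
  set C := w (Sum.inr 0) (Sum.inl 0) with hC
  set D := w (Sum.inr 0) (Sum.inr 0) with hD
  constructor
  · intro hw
    rw [OplusGrp, Finset.mem_filter] at hw
    obtain ⟨-, -, hθ⟩ := hw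
    have key : ∀ s t : F, (A * s + B * t) * (C * s + D * t) = s * t := by
      intro s t
      have := hθ (Sum.elim (fun _ => s) (fun _ => t))
      simpa [theta_apply, Matrix.mulVec, dotProduct, Fintype.sum_sum_type,
        ← hA, ← hB, ← hC, ← hD] using this
    have hAC : A * C = 0 := by have := key 1 0; linear_combination this
    have hBD : B * D = 0 := by have := key 0 1; linear_combination this
    have hADBC : A * D + B * C = 1 := by
      have := key 1 1; linear_combination this - hAC - hBD
    rcases mul_eq_zero.mp hAC with hA0 | hC0
    · right
      have hBC : B * C = 1 := by rw [hA0] at hADBC; linear_combination hADBC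
      have hBne : B ≠ 0 := fun h => by simp [h] at hBC
      have hCval : C = B⁻¹ := eq_inv_of_mul_eq_one_left (by linear_combination hBC)
      have hD0 : D = 0 := by
        rcases mul_eq_zero.mp hBD with h | h
        · exact absurd h hBne
        · exact h
      refine ⟨B, hBne, ?_⟩
      ext i j
      rcases i with i | i <;> rcases j with j | j <;>
        have hi : i = 0 := Subsingleton.elim _ _ <;>
        have hj : j = 0 := Subsingleton.elim _ _ <;>
        subst hi hj <;> simp [amat, ← hA, ← hB, ← hC, ← hD, hA0, hCval, hD0]
    · left
      have hAD : A * D = 1 := by rw [hC0] at hADBC; linear_combination hADBC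
      have hAne : A ≠ 0 := fun h => by simp [h] at hAD
      have hDval : D = A⁻¹ := eq_inv_of_mul_eq_one_right hAD
      have hB0 : B = 0 := by
        rcases mul_eq_zero.mp hBD with h | h
        · exact h
        · exfalso; rw [h] at hAD; simp at hAD
      refine ⟨A, hAne, ?_⟩
      ext i j
      rcases i with i | i <;> rcases j with j | j <;>
        have hi : i = 0 := Subsingleton.elim _ _ <;>
        have hj : j = 0 := Subsingleton.elim _ _ <;>
        subst hi hj <;> simp [dmat, ← hA, ← hB, ← hC, ← hD, hC0, hDval, hB0]
  · intro hw
    rw [OplusGrp, Finset.mem_filter]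
    refine ⟨Finset.mem_univ _, ?_, ?_⟩
    · rcases hw with ⟨α, hα, rfl⟩ | ⟨β, hβ, rfl⟩
      · refine (Matrix.isUnit_iff_isUnit_det _).mpr
          (Matrix.isUnit_det_of_right_inverse (B := dmat F α⁻¹) ?_)
        ext i j
        rcases i with i | i <;> rcases j with j | j <;>
          simp [dmat, Matrix.mul_apply, Fintype.sum_sum_type, Matrix.one_apply,
            inv_inv, mul_inv_cancel₀ hα, inv_mul_cancel₀ hα, Subsingleton.elim i j]
      · refine (Matrix.isUnit_iff_isUnit_det _).mpr
          (Matrix.isUnit_det_of_right_inverse (B := amat F β) ?_)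
        ext i j
        rcases i with i | i <;> rcases j with j | j <;>
          simp [amat, Matrix.mul_apply, Fintype.sum_sum_type, Matrix.one_apply,
            mul_inv_cancel₀ hβ, inv_mul_cancel₀ hβ, Subsingleton.elim i j]
    · intro x
      rcases hw with ⟨α, hα, rfl⟩ | ⟨β, hβ, rfl⟩ <;>
        · rw [theta_apply, theta_apply]
          simp [Matrix.mulVec, dotProduct, Fintype.sum_sum_type, dmat, amat]
          field_simp

omit [Fintype F] [DecidableEq F] in
lemma trace_dmat (α : F) : Matrix.trace (dmat F α) = α + α⁻¹ := by
  simp [Matrix.trace, Matrix.diag, Fintype.sum_sum_type, dmat]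

omit [Fintype F] [DecidableEq F] in
lemma trace_amat (β : F) : Matrix.trace (amat F β) = 0 := by
  simp [Matrix.trace, Matrix.diag, Fintype.sum_sum_type, amat]

end grp

theorem stmt5 (r : ℕ) (hr : 1 ≤ r) (F : Type) [Field F] [Fintype F] [DecidableEq F]
    (hF : Fintype.card F = 2 ^ r) (a : F) (ha : a ≠ 0) :
    ∑ w ∈ OplusGrp F 1, lam F r (a * Matrix.trace w) = Kl F r a + (2 ^ r : ℤ) - 1 := by
  classical
  set T : Finset F := Finset.univ.filter (fun α : F => α ≠ 0) with hT
  have hmemT : ∀ α : F, α ∈ T ↔ α ≠ 0 := by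
    intro α; simp [hT]
  -- the group as a union
  have hG : OplusGrp F 1 = (T.image (dmat F)) ∪ (T.image (amat F)) := by
    ext w
    rw [mem_O_iff]
    simp only [Finset.mem_union, Finset.mem_image]
    constructor
    · rintro (⟨α, hα, rfl⟩ | ⟨β, hβ, rfl⟩)
      · exact Or.inl ⟨α, (hmemT α).mpr hα, rfl⟩
      · exact Or.inr ⟨β, (hmemT β).mpr hβ, rfl⟩
    · rintro (⟨α, hα, rfl⟩ | ⟨β, hβ, rfl⟩)
      · exact Or.inl ⟨α, (hmemT α).mp hα, rfl⟩
      · exact Or.inr ⟨β, (hmemT β).mp hβ, rfl⟩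
  have hdisj : Disjoint (T.image (dmat F)) (T.image (amat F)) := by
    rw [Finset.disjoint_left]
    rintro w hw1 hw2
    obtain ⟨α, hα, rfl⟩ := Finset.mem_image.mp hw1
    obtain ⟨β, hβ, hβw⟩ := Finset.mem_image.mp hw2
    have := congrFun (congrFun hβw (Sum.inl 0)) (Sum.inl 0)
    simp [dmat, amat] at this
    exact (hmemT α).mp hα this.symm
  rw [hG, Finset.sum_union hdisj]
  have hinj1 : ∀ x ∈ T, ∀ y ∈ T, dmat F x = dmat F y → x = y := by
    intro x _ y _ h
    exact congrFun (congrFun h (Sum.inl 0)) (Sum.inl 0)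
  have hinj2 : ∀ x ∈ T, ∀ y ∈ T, amat F x = amat F y → x = y := by
    intro x _ y _ h
    exact congrFun (congrFun h (Sum.inl 0)) (Sum.inr 0)
  rw [Finset.sum_image hinj1, Finset.sum_image hinj2]
  -- the antidiagonal part
  have hpart2 : ∑ β ∈ T, lam F r (a * Matrix.trace (amat F β)) = (2 ^ r : ℤ) - 1 := by
    have hone : ∀ β ∈ T, lam F r (a * Matrix.trace (amat F β)) = 1 := by
      intro β _
      rw [trace_amat, mul_zero, lam_zero]
    rw [Finset.sum_congr rfl hone]
    have hcard : T.card = 2 ^ r - 1 := by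
      rw [hT, Finset.filter_ne', Finset.card_erase_of_mem (Finset.mem_univ 0),
        Finset.card_univ, hF]
    rw [Finset.sum_const, hcard]
    have h1 : (1:ℕ) ≤ 2 ^ r := Nat.one_le_two_pow
    rw [nsmul_eq_mul, mul_one, Nat.cast_sub h1]
    push_cast
    ring
  -- the diagonal part
  have hpart1 : ∑ α ∈ T, lam F r (a * Matrix.trace (dmat F α)) = Kl F r a := by
    have hKl : Kl F r a = ∑ γ ∈ T, lam F r (γ + a * γ⁻¹) := by
      rw [Kl]
      apply Finset.sum_congr
      · rw [hT]
        convert rfl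
      · intros; rfl
    rw [hKl]
    set s : F → F := fun x => x ^ 2 ^ (r - 1) with hs
    have hs_sq : ∀ x : F, (s x) ^ 2 = x := by
      intro x
      rw [hs]
      dsimp only
      rw [← pow_mul]
      have : 2 ^ (r - 1) * 2 = 2 ^ r := by
        rw [← pow_succ]
        congr 1
        omega
      rw [this, pow_card' F r hF]
    refine Finset.sum_nbij' (fun α => s (a * α)) (fun γ => a⁻¹ * γ ^ 2) ?_ ?_ ?_ ?_ ?_
    · intro α hα
      rw [hmemT] at hα ⊢
      intro h
      have h2 := hs_sq (a * α)
      rw [h] at h2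
      simp at h2
      rcases h2 with h' | h'
      · exact ha h'
      · exact hα h'
    · intro γ hγ
      rw [hmemT] at hγ ⊢
      exact mul_ne_zero (inv_ne_zero ha) (pow_ne_zero 2 hγ)
    · intro α hα
      rw [hs_sq (a * α), ← mul_assoc, inv_mul_cancel₀ ha, one_mul]
    · intro γ hγ
      have h0 : a * (a⁻¹ * γ ^ 2) = γ ^ 2 := by
        rw [← mul_assoc, mul_inv_cancel₀ ha, one_mul]
      rw [h0, hs]
      dsimp only
      rw [← pow_mul]
      have h2 : 2 * 2 ^ (r - 1) = 2 ^ r := by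
        rw [← pow_succ']
        congr 1
        omega
      rw [h2, pow_card' F r hF]
    · intro α hα
      have hαne := (hmemT α).mp hα
      set γ := s (a * α) with hγdef
      have hγne : γ ≠ 0 := by
        intro h
        have := hs_sq (a * α)
        rw [hγdef] at h
        rw [h] at this
        simp at this
        rcases this with h' | h'
        · exact ha h'
        · exact hαne h'
      have hγsq : γ ^ 2 = a * α := hs_sq (a * α)
      -- lam (γ + a γ⁻¹) = lam ((γ + aγ⁻¹)^2) = lam (γ² + a² γ⁻²) = lam (aα + aα⁻¹)
      have e1 : (γ + a * γ⁻¹) ^ 2 = γ ^ 2 + a ^ 2 * (γ ^ 2)⁻¹ := by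
        rw [sq_add F r hF hr, mul_pow, inv_pow]
      have e2 : γ ^ 2 + a ^ 2 * (γ ^ 2)⁻¹ = a * Matrix.trace (dmat F α) := by
        rw [hγsq, trace_dmat, mul_add]
        congr 1
        rw [mul_inv, sq]
        field_simp
      calc lam F r (a * Matrix.trace (dmat F α))
          = lam F r ((γ + a * γ⁻¹) ^ 2) := by rw [e1, e2]
        _ = lam F r (γ + a * γ⁻¹) := lam_sq F r hF _
  rw [hpart1, hpart2]
  ring
end

section
/- Let q = 2^r with r a positive integer and let β ∈ 𝔽_q. Then the number of w ∈ SO⁺(2,q) with matrix trace Tr w = β equals 1 if β = 0; equals 2 if β ≠ 0 and tr(β^{−1}) = 0; and equals 0 if β ≠ 0 and tr(β^{−1}) = 1. -/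
open Finset Matrix

section Stmt10Aux

open Finset Polynomial Matrix

variable {F : Type} [Field F] [Fintype F] [DecidableEq F] {r : ℕ}

omit [Fintype F] [DecidableEq F] in
lemma aux_index_cases (i : Fin 1 ⊕ Fin 1) : i = Sum.inl 0 ∨ i = Sum.inr 0 := by
  rcases i with i | i
  · left; congr; exact Subsingleton.elim _ _
  · right; congr; exact Subsingleton.elim _ _

omit [DecidableEq F] in
lemma aux_charP (hr : 1 ≤ r) (hF : Fintype.card F = 2 ^ r) : CharP F 2 := by
  have h0 : ((Fintype.card F : ℕ) : F) = 0 := FiniteField.cast_card_eq_zero F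
  rw [hF] at h0
  push_cast at h0
  have h2 : ((2:ℕ) : F) = 0 := by exact_mod_cast pow_eq_zero_iff (by omega : r ≠ 0) |>.mp h0
  have hd : ringChar F ∣ 2 := (CharP.cast_eq_zero_iff F (ringChar F) 2).mp h2
  have : ringChar F = 2 :=
    ((Nat.prime_two).eq_one_or_self_of_dvd _ hd).resolve_left (CharP.ringChar_ne_one)
  rw [← this]; exact ringChar.charP F

omit [Fintype F] [DecidableEq F] in
lemma aux_trF_add (h2 : CharP F 2) (x y : F) : trF F r (x + y) = trF F r x + trF F r y := by
  haveI := h2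
  haveI : Fact (Nat.Prime 2) := ⟨Nat.prime_two⟩
  unfold trF
  rw [← Finset.sum_add_distrib]
  exact Finset.sum_congr rfl fun i _ => add_pow_char_pow x y 2 i

omit [DecidableEq F] in
lemma aux_trF_sq (hF : Fintype.card F = 2 ^ r) (x : F) : trF F r (x ^ 2) = trF F r x := by
  have hx : x ^ 2 ^ r = x := by rw [← hF]; exact FiniteField.pow_card x
  have e1 : trF F r (x ^ 2) = ∑ i ∈ range r, x ^ 2 ^ (i + 1) :=
    Finset.sum_congr rfl fun i _ => by rw [← pow_mul, ← pow_succ']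
  have A := Finset.sum_range_succ (fun i => x ^ 2 ^ i) r
  have B := Finset.sum_range_succ' (fun i => x ^ 2 ^ i) r
  simp only [pow_zero, pow_one, hx] at A B
  have key : (∑ i ∈ range r, x ^ 2 ^ (i + 1)) + x = (∑ i ∈ range r, x ^ 2 ^ i) + x := by
    rw [← B, A]
  have := add_right_cancel key
  rw [e1, this]; rfl

omit [DecidableEq F] in
lemma aux_trF_tsq (h2 : CharP F 2) (hF : Fintype.card F = 2 ^ r) (t : F) :
    trF F r (t ^ 2 + t) = 0 := by
  haveI := h2
  rw [aux_trF_add h2, aux_trF_sq hF]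
  exact CharTwo.add_self_eq_zero _

lemma aux_ker_card_le (hr : 1 ≤ r) :
    (univ.filter fun x : F => trF F r x = 0).card ≤ 2 ^ (r - 1) := by
  set P : F[X] := ∑ i ∈ range r, X ^ 2 ^ i with hP
  have heval : ∀ x : F, P.eval x = trF F r x := by
    intro x; simp [hP, trF, Polynomial.eval_finset_sum]
  have hPne : P ≠ 0 := by
    intro h
    have hc : P.coeff 1 = 1 := by
      rw [hP, Polynomial.finset_sum_coeff]
      rw [Finset.sum_eq_single 0]
      · simp
      · intro i hi hne
        rw [Polynomial.coeff_X_pow]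
        simp only [ite_eq_right_iff]
        intro h1
        exfalso
        have : 2 ^ i ≠ 1 := by
          have : 1 < 2 ^ i := Nat.one_lt_two_pow hne
          omega
        omega
      · intro h0; exact absurd (Finset.mem_range.mpr hr) h0
    rw [h] at hc; simp at hc
  have hdeg : P.natDegree ≤ 2 ^ (r - 1) := by
    apply Polynomial.natDegree_sum_le_of_forall_le
    intro i hi
    rw [Polynomial.natDegree_X_pow]
    have := Finset.mem_range.mp hi
    exact Nat.pow_le_pow_right (by norm_num) (by omega)
  have hsub : (univ.filter fun x : F => trF F r x = 0) ⊆ P.roots.toFinset := by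
    intro x hx
    rw [Finset.mem_filter] at hx
    rw [Multiset.mem_toFinset, Polynomial.mem_roots hPne, Polynomial.IsRoot, heval]
    exact hx.2
  calc (univ.filter fun x : F => trF F r x = 0).card
      ≤ P.roots.toFinset.card := Finset.card_le_card hsub
    _ ≤ Multiset.card P.roots := Multiset.toFinset_card_le _
    _ ≤ P.natDegree := Polynomial.card_roots' P
    _ ≤ 2 ^ (r - 1) := hdeg

lemma aux_img_card (h2 : CharP F 2) (hr : 1 ≤ r) (hF : Fintype.card F = 2 ^ r) :
    (univ.image fun t : F => t ^ 2 + t).card = 2 ^ (r - 1) := by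
  haveI := h2
  have key : (univ : Finset F).card = ∑ b ∈ univ.image (fun t : F => t ^ 2 + t),
      (univ.filter fun a : F => a ^ 2 + a = b).card :=
    Finset.card_eq_sum_card_image _ _
  have hfib : ∀ b ∈ univ.image (fun t : F => t ^ 2 + t),
      (univ.filter fun a : F => a ^ 2 + a = b).card = 2 := by
    intro b hb
    obtain ⟨t₀, -, ht₀⟩ := Finset.mem_image.mp hb
    have h22 : (2 : F) = 0 := CharTwo.two_eq_zero
    have : (univ.filter fun a : F => a ^ 2 + a = b) = {t₀, t₀ + 1} := by
      ext x
      simp only [Finset.mem_filter, Finset.mem_univ, true_and, Finset.mem_insert,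
        Finset.mem_singleton]
      constructor
      · intro hx
        have h0 : (x + t₀) * ((x + t₀) + 1) = 0 := by
          linear_combination hx + ht₀ + (x * t₀ + b) * h22
        rcases mul_eq_zero.mp h0 with h | h
        · left; linear_combination h - t₀ * h22
        · right; linear_combination h - (t₀ + 1) * h22
      · rintro (rfl | rfl)
        · exact ht₀
        · linear_combination ht₀ + (t₀ + 1) * h22
    rw [this, Finset.card_insert_of_notMem, Finset.card_singleton]
    simp only [Finset.mem_singleton]
    intro h
    have : (1 : F) = 0 := by linear_combination -h
    exact one_ne_zero this
  rw [Finset.sum_congr rfl hfib, Finset.sum_const, smul_eq_mul, Finset.card_univ, hF] at key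
  have : 2 ^ r = 2 ^ (r - 1) * 2 := by
    rw [← pow_succ]; congr 1; omega
  omega

lemma aux_exists_tsq (h2 : CharP F 2) (hr : 1 ≤ r) (hF : Fintype.card F = 2 ^ r) (x : F)
    (hx : trF F r x = 0) : ∃ t : F, t ^ 2 + t = x := by
  have hsub : (univ.image fun t : F => t ^ 2 + t) ⊆
      (univ.filter fun x : F => trF F r x = 0) := by
    intro y hy
    obtain ⟨t, -, rfl⟩ := Finset.mem_image.mp hy
    exact Finset.mem_filter.mpr ⟨Finset.mem_univ _, aux_trF_tsq h2 hF t⟩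
  have heq := Finset.eq_of_subset_of_card_le hsub (by
    rw [aux_img_card h2 hr hF]; exact aux_ker_card_le hr)
  have : x ∈ univ.image fun t : F => t ^ 2 + t := by
    rw [heq]; exact Finset.mem_filter.mpr ⟨Finset.mem_univ _, hx⟩
  obtain ⟨t, -, ht⟩ := Finset.mem_image.mp this
  exact ⟨t, ht⟩

/-- The diagonal-ish matrix with blocks a, 0, 0, b. -/
def auxDmat (a b : F) : Matrix (Fin 1 ⊕ Fin 1) (Fin 1 ⊕ Fin 1) F :=
  Matrix.fromBlocks (Matrix.of fun _ _ => a) 0 0 (Matrix.of fun _ _ => b)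

omit [Fintype F] [DecidableEq F] in
lemma auxDmat_trace (a b : F) : Matrix.trace (auxDmat a b) = a + b := by
  simp [auxDmat, Matrix.trace, Matrix.diag, Fintype.sum_sum_type]

omit [Fintype F] [DecidableEq F] in
lemma aux_theta_eval (w : Matrix (Fin 1 ⊕ Fin 1) (Fin 1 ⊕ Fin 1) F) (s t : F) :
    thetaPlus F 1 (w.mulVec (Sum.elim (fun _ => s) (fun _ => t))) =
      (w (Sum.inl 0) (Sum.inl 0) * s + w (Sum.inl 0) (Sum.inr 0) * t) *
      (w (Sum.inr 0) (Sum.inl 0) * s + w (Sum.inr 0) (Sum.inr 0) * t) := by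
  simp [thetaPlus, Matrix.mulVec, dotProduct, Fintype.sum_sum_type]

omit [Fintype F] [DecidableEq F] in
lemma aux_theta_id (s t : F) : thetaPlus F 1 (Sum.elim (fun _ => s) (fun _ => t)) = s * t := by
  simp [thetaPlus]

omit [Fintype F] [DecidableEq F] in
lemma aux_delta_eval (w : Matrix (Fin 1 ⊕ Fin 1) (Fin 1 ⊕ Fin 1) F) :
    Matrix.trace (Matrix.toBlocks₁₂ w * (Matrix.toBlocks₂₁ w)ᵀ) =
      w (Sum.inl 0) (Sum.inr 0) * w (Sum.inr 0) (Sum.inl 0) := by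
  simp [Matrix.toBlocks₁₂, Matrix.toBlocks₂₁, Matrix.trace, Matrix.diag, Matrix.mul_apply]

lemma aux_mem_SO_iff (w : Matrix (Fin 1 ⊕ Fin 1) (Fin 1 ⊕ Fin 1) F) :
    w ∈ SOplusGrp F 1 ↔ ∃ a : F, a ≠ 0 ∧ w = auxDmat a a⁻¹ := by
  constructor
  · intro hw
    rw [SOplusGrp, Finset.mem_filter, OplusGrp, Finset.mem_filter] at hw
    obtain ⟨⟨-, hU, hθ⟩, hδ⟩ := hw
    set a := w (Sum.inl 0) (Sum.inl 0)
    set b := w (Sum.inl 0) (Sum.inr 0)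
    set c := w (Sum.inr 0) (Sum.inl 0)
    set d := w (Sum.inr 0) (Sum.inr 0)
    have key : ∀ s t : F, (a * s + b * t) * (c * s + d * t) = s * t := by
      intro s t
      have := hθ (Sum.elim (fun _ => s) (fun _ => t))
      rwa [aux_theta_eval, aux_theta_id] at this
    have hac : a * c = 0 := by have := key 1 0; simpa using this
    have hbd : b * d = 0 := by have := key 0 1; simpa using this
    have hbc : b * c = 0 := by rw [aux_delta_eval] at hδ; exact hδ
    have had : a * d = 1 := by
      have h11 := key 1 1
      simp only [mul_one, one_mul] at h11
      linear_combination h11 - hac - hbd - hbc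
    have ha : a ≠ 0 := fun h => by simp [h] at had
    have hd : d ≠ 0 := fun h => by simp [h] at had
    have hc : c = 0 := by rcases mul_eq_zero.mp hac with h | h; exact absurd h ha; exact h
    have hb : b = 0 := by rcases mul_eq_zero.mp hbd with h | h; exact h; exact absurd h hd
    refine ⟨a, ha, ?_⟩
    have hdinv : d = a⁻¹ := by field_simp; linear_combination had
    ext i j
    rcases aux_index_cases i with rfl | rfl <;> rcases aux_index_cases j with rfl | rfl
    · simp [auxDmat]; rfl
    · simpa [auxDmat] using hb
    · simpa [auxDmat] using hc
    · simpa [auxDmat] using hdinv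
  · rintro ⟨a, ha, rfl⟩
    rw [SOplusGrp, Finset.mem_filter, OplusGrp, Finset.mem_filter]
    refine ⟨⟨Finset.mem_univ _, ?_, ?_⟩, ?_⟩
    · rw [Matrix.isUnit_iff_isUnit_det]
      have hdet : (auxDmat a a⁻¹).det = 1 := by
        rw [auxDmat, Matrix.det_fromBlocks_zero₂₁]
        simp [Matrix.det_fin_one, ha]
      rw [hdet]; exact isUnit_one
    · intro x
      have hx : x = Sum.elim (fun _ => x (Sum.inl 0)) (fun _ => x (Sum.inr 0)) := by
        funext i; rcases aux_index_cases i with rfl | rfl <;> simp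
      rw [hx, aux_theta_eval, aux_theta_id]
      simp [auxDmat]
      field_simp
    · rw [aux_delta_eval]; simp [auxDmat]

lemma aux_count (β : F) :
    ((SOplusGrp F 1).filter (fun w => Matrix.trace w = β)).card =
      (univ.filter (fun a : F => a ≠ 0 ∧ a + a⁻¹ = β)).card := by
  have himg : (SOplusGrp F 1).filter (fun w => Matrix.trace w = β) =
      (univ.filter (fun a : F => a ≠ 0 ∧ a + a⁻¹ = β)).image (fun a => auxDmat a a⁻¹) := by
    ext w
    simp only [Finset.mem_filter, Finset.mem_image, Finset.mem_univ, true_and]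
    constructor
    · rintro ⟨hw, htr⟩
      obtain ⟨a, ha, rfl⟩ := (aux_mem_SO_iff w).mp hw
      exact ⟨a, ⟨ha, by rw [← auxDmat_trace a a⁻¹]; exact htr⟩, rfl⟩
    · rintro ⟨a, ⟨ha, hab⟩, rfl⟩
      exact ⟨(aux_mem_SO_iff _).mpr ⟨a, ha, rfl⟩, by rw [auxDmat_trace]; exact hab⟩
  rw [himg, Finset.card_image_of_injOn]
  intro x hx y hy hxy
  have := congrFun (congrFun hxy (Sum.inl 0)) (Sum.inl 0)
  simpa [auxDmat] using this

end Stmt10Aux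

theorem stmt10 (r : ℕ) (hr : 1 ≤ r) (F : Type) [Field F] [Fintype F] [DecidableEq F]
    (hF : Fintype.card F = 2 ^ r) (β : F) :
    (β = 0 → ((SOplusGrp F 1).filter (fun w => Matrix.trace w = β)).card = 1) ∧
    (β ≠ 0 → trF F r β⁻¹ = 0 →
      ((SOplusGrp F 1).filter (fun w => Matrix.trace w = β)).card = 2) ∧
    (β ≠ 0 → trF F r β⁻¹ = 1 →
      ((SOplusGrp F 1).filter (fun w => Matrix.trace w = β)).card = 0) := by
  classical
  have h2 : CharP F 2 := aux_charP hr hF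
  haveI := h2
  have h22 : (2 : F) = 0 := CharTwo.two_eq_zero
  refine ⟨?_, ?_, ?_⟩
  · rintro rfl
    rw [aux_count]
    have hset : (univ.filter (fun a : F => a ≠ 0 ∧ a + a⁻¹ = 0)) = {(1 : F)} := by
      ext a
      simp only [Finset.mem_filter, Finset.mem_univ, true_and, Finset.mem_singleton]
      constructor
      · rintro ⟨ha, h⟩
        have hq : a ^ 2 + 1 = 0 := by field_simp at h; linear_combination h
        have hsq : (a + 1) ^ 2 = 0 := by linear_combination hq + a * h22
        have := pow_eq_zero_iff (two_ne_zero) |>.mp hsq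
        linear_combination this - h22
      · rintro rfl
        exact ⟨one_ne_zero, by rw [inv_one]; linear_combination h22⟩
    rw [hset, Finset.card_singleton]
  · intro hβ htr
    rw [aux_count]
    have hT2 : trF F r ((β⁻¹) ^ 2) = 0 := by rw [aux_trF_sq hF]; exact htr
    obtain ⟨t₀, hT⟩ := aux_exists_tsq h2 hr hF _ hT2
    have hβi : β⁻¹ ≠ 0 := inv_ne_zero hβ
    have hβi2 : (β⁻¹ : F) ^ 2 ≠ 0 := pow_ne_zero _ hβi
    have ht0 : t₀ ≠ 0 := by
      rintro rfl
      apply hβi2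
      rw [← hT]; ring
    have ht1 : t₀ + 1 ≠ 0 := by
      intro h
      apply hβi2
      rw [← hT]
      linear_combination t₀ * h
    have hmemgen : ∀ t : F, t ≠ 0 → t ^ 2 + t = (β⁻¹) ^ 2 → β * t + (β * t)⁻¹ = β := by
      intro t ht hTt
      field_simp
      field_simp at hTt
      linear_combination hTt + (1 - β ^ 2 * t) * h22
    have hset : (univ.filter (fun a : F => a ≠ 0 ∧ a + a⁻¹ = β)) =
        {β * t₀, β * (t₀ + 1)} := by
      ext a
      simp only [Finset.mem_filter, Finset.mem_univ, true_and, Finset.mem_insert,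
        Finset.mem_singleton]
      constructor
      · rintro ⟨ha, h⟩
        have hq : a ^ 2 + 1 = β * a := by field_simp at h; linear_combination h
        have hβmul : β⁻¹ * β = 1 := inv_mul_cancel₀ hβ
        have hTa : (β⁻¹ * a) ^ 2 + (β⁻¹ * a) = (β⁻¹) ^ 2 := by
          linear_combination (β⁻¹ ^ 2) * hq + (β⁻¹ * a) * hβmul +
            (β⁻¹ * a - β⁻¹ ^ 2) * h22
        have hfac : ((β⁻¹ * a) + t₀) * (((β⁻¹ * a) + t₀) + 1) = 0 := by
          linear_combination hTa - hT + ((β⁻¹ * a) * t₀ + t₀ ^ 2 + t₀) * h22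
        have haeq : a = β * (β⁻¹ * a) := by
          rw [← mul_assoc, mul_inv_cancel₀ hβ, one_mul]
        rcases mul_eq_zero.mp hfac with h' | h'
        · left
          rw [haeq]
          have : β⁻¹ * a = t₀ := by linear_combination h' - t₀ * h22
          rw [this]
        · right
          rw [haeq]
          have : β⁻¹ * a = t₀ + 1 := by linear_combination h' - (t₀ + 1) * h22
          rw [this]
      · rintro (rfl | rfl)
        · exact ⟨mul_ne_zero hβ ht0, hmemgen t₀ ht0 hT⟩
        · refine ⟨mul_ne_zero hβ ht1, hmemgen (t₀ + 1) ht1 ?_⟩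
          linear_combination hT + (t₀ + 1) * h22
    rw [hset]
    rw [Finset.card_insert_of_notMem, Finset.card_singleton]
    simp only [Finset.mem_singleton]
    intro h
    apply hβ
    linear_combination -h
  · intro hβ htr
    rw [aux_count, Finset.card_eq_zero, Finset.eq_empty_iff_forall_notMem]
    intro a ha
    rw [Finset.mem_filter] at ha
    obtain ⟨-, ha, h⟩ := ha
    have hq : a ^ 2 + 1 = β * a := by field_simp at h; linear_combination h
    have hβmul : β⁻¹ * β = 1 := inv_mul_cancel₀ hβ
    have hTa : (β⁻¹ * a) ^ 2 + (β⁻¹ * a) = (β⁻¹) ^ 2 := by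
      linear_combination (β⁻¹ ^ 2) * hq + (β⁻¹ * a) * hβmul + (β⁻¹ * a - β⁻¹ ^ 2) * h22
    have h0 := aux_trF_tsq h2 hF (β⁻¹ * a)
    rw [hTa, aux_trF_sq hF, htr] at h0
    exact one_ne_zero h0
end
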